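/- Let b be a square-free integer with b ∉ {0, 3, 5} such that 256 - 27*b is square-free. Then the Galois group of the splitting field of x^4 + b*x + b over the rationals is isomorphic to the symmetric group S_4. -/

import Mathlib

open Polynomial IntermediateField

lemma sq_ne_aux (c : ℤ) (hc : c = 229 ∨ c = 404 ∨ c = 564 ∨ c = 469) (k : ℤ) : k ^ 2 ≠ c := by
  rcases hc with rfl | rfl | rfl | rfl <;>
  · intro h
    have h1 : k ≤ 24 := by nlinarith [sq_nonneg (k - 25)]
    have h2 : -24 ≤ k := by nlinarith [sq_nonneg (k + 25)]
    interval_cases k <;> omega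

lemma not_square_aux (b : ℤ) (hsf : Squarefree b) (h0 : b ≠ 0) (h3 : b ≠ 3) (h5 : b ≠ 5)
    (hsf' : Squarefree (256 - 27 * b)) (k : ℤ) : k ^ 2 ≠ b ^ 3 * (256 - 27 * b) := by
  intro h
  have hbk2 : b ∣ k ^ 2 := ⟨b ^ 2 * (256 - 27 * b), by linear_combination h⟩
  have hbk : b ∣ k := (hsf.dvd_pow_iff_dvd two_ne_zero).mp hbk2
  obtain ⟨s, rfl⟩ := hbk
  have hb2 : b ^ 2 ≠ 0 := pow_ne_zero 2 h0
  have hs : s ^ 2 = b * (256 - 27 * b) := by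
    have h' : b ^ 2 * (s ^ 2 - b * (256 - 27 * b)) = 0 := by linear_combination h
    rcases mul_eq_zero.mp h' with h'' | h''
    · exact absurd h'' hb2
    · linarith
  have hge : (0:ℤ) ≤ b * (256 - 27 * b) := hs ▸ sq_nonneg s
  have hb1 : 1 ≤ b := by
    by_contra hb
    push_neg at hb
    have hbneg : b ≤ -1 := by omega
    nlinarith [mul_pos (by linarith : (0:ℤ) < -b) (by linarith : (0:ℤ) < 256 - 27 * b)]
  have hb9 : b ≤ 9 := by
    by_contra hb
    push_neg at hb
    nlinarith [mul_pos (by linarith : (0:ℤ) < b) (by linarith : (0:ℤ) < 27 * b - 256)]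
  interval_cases b
  · exact sq_ne_aux 229 (by norm_num) s (by linarith)
  · exact sq_ne_aux 404 (by norm_num) s (by linarith)
  · exact h3 rfl
  · exact absurd (hsf 2 (by norm_num)) (by decide)
  · exact h5 rfl
  · exact sq_ne_aux 564 (by norm_num) s (by linarith)
  · exact sq_ne_aux 469 (by norm_num) s (by linarith)
  · exact absurd (hsf 2 (by norm_num)) (by decide)
  · exact absurd (hsf 3 (by norm_num)) (by decide)

lemma cubic_no_int_root (b : ℤ) (hsf : Squarefree b) (h0 : b ≠ 0) (h3 : b ≠ 3) (h5 : b ≠ 5)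
    (r : ℤ) : r ^ 3 - 4 * b * r - b ^ 2 ≠ 0 := by
  intro h
  have hbr3 : b ∣ r ^ 3 := ⟨4 * r + b, by linear_combination h⟩
  have hbr : b ∣ r := (hsf.dvd_pow_iff_dvd three_ne_zero).mp hbr3
  obtain ⟨s, rfl⟩ := hbr
  have key : b * s ^ 3 = 4 * s + 1 := by
    have hb2 : b ^ 2 ≠ 0 := pow_ne_zero 2 h0
    have h' : b ^ 2 * (b * s ^ 3 - 4 * s - 1) = 0 := by linear_combination h
    rcases mul_eq_zero.mp h' with h'' | h''
    · exact absurd h'' hb2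
    · linarith
  have hs1 : s ∣ 1 := by
    have hd : s ∣ b * s ^ 3 - 4 * s := ⟨b * s ^ 2 - 4, by ring⟩
    rw [key] at hd
    simpa using hd
  rcases Int.isUnit_iff.mp (isUnit_of_dvd_one hs1) with rfl | rfl
  · apply h5; nlinarith [key]
  · apply h3; nlinarith [key]

lemma monic_quad_struct {F : Type*} [Field F] (g : F[X]) (hm : g.Monic) (hd : g.natDegree = 2) :
    g = X ^ 2 + C (g.coeff 1) * X + C (g.coeff 0) := by
  have hlc : g.coeff 2 = 1 := by
    have h := hm.leadingCoeff
    rwa [leadingCoeff, hd] at h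
  ext n
  match n with
  | 0 => simp
  | 1 => simp [coeff_X_pow]
  | 2 => simp [coeff_X_pow, hlc]
  | (n+3) =>
    rw [coeff_eq_zero_of_natDegree_lt (by omega : g.natDegree < n + 3)]
    simp [coeff_X_pow, coeff_C]

lemma monic_lin_struct {F : Type*} [Field F] (g : F[X]) (hm : g.Monic) (hd : g.natDegree = 1) :
    g = X + C (g.coeff 0) := by
  have hlc : g.coeff 1 = 1 := by
    have h := hm.leadingCoeff
    rwa [leadingCoeff, hd] at h
  ext n
  match n with
  | 0 => simp
  | 1 => simp [hlc]
  | (n+2) =>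
    rw [coeff_eq_zero_of_natDegree_lt (by omega : g.natDegree < n + 2)]
    simp [coeff_C, coeff_X]

lemma irr_F2 : Irreducible (X ^ 4 + X + 1 : (ZMod 2)[X]) := by
  have hmon : (X ^ 4 + X + 1 : (ZMod 2)[X]).Monic := by monicity!
  have hdeg : (X ^ 4 + X + 1 : (ZMod 2)[X]).natDegree = 4 := by compute_degree!
  have hnr : ∀ x : ZMod 2, ¬ (X ^ 4 + X + 1 : (ZMod 2)[X]).IsRoot x := by
    intro x hx
    rw [IsRoot] at hx
    simp only [eval_add, eval_pow, eval_X, eval_one] at hx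
    revert hx
    revert x
    decide
  have hfac1 : ∀ g h : (ZMod 2)[X], X ^ 4 + X + 1 = g * h → g.Monic → g.natDegree = 1 → False := by
    intro g h hgh hmg hdg
    have hg := monic_lin_struct g hmg hdg
    apply hnr (-(g.coeff 0))
    rw [IsRoot, hgh, eval_mul, hg]
    simp
    exact Or.inl (CharTwo.add_self_eq_zero _)
  constructor
  · intro h
    have := natDegree_eq_zero_of_isUnit h
    omega
  intro g h hgh
  by_contra hcon
  push_neg at hcon
  obtain ⟨hgu, hhu⟩ := hcon
  have hp0 : (X ^ 4 + X + 1 : (ZMod 2)[X]) ≠ 0 := hmon.ne_zero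
  have hg0 : g ≠ 0 := by rintro rfl; simp at hgh; exact hp0 hgh
  have hh0 : h ≠ 0 := by rintro rfl; simp at hgh; exact hp0 hgh
  have hmul : g.natDegree + h.natDegree = 4 := by
    rw [← natDegree_mul hg0 hh0, ← hgh, hdeg]
  have hone : ∀ u : ZMod 2, u ≠ 0 → u = 1 := by decide
  have hlg : g.leadingCoeff * h.leadingCoeff = 1 := by
    rw [← leadingCoeff_mul, ← hgh]; exact hmon
  have hmg : g.Monic := hone _ (leadingCoeff_ne_zero.mpr hg0)
  have hmh : h.Monic := hone _ (leadingCoeff_ne_zero.mpr hh0)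
  have hdg1 : g.natDegree ≠ 0 := by
    intro hd
    exact hgu (isUnit_iff_degree_eq_zero.mpr (by rw [degree_eq_natDegree hg0, hd]; rfl))
  have hdh1 : h.natDegree ≠ 0 := by
    intro hd
    exact hhu (isUnit_iff_degree_eq_zero.mpr (by rw [degree_eq_natDegree hh0, hd]; rfl))
  -- cases on degree of g
  rcases (by omega : g.natDegree = 1 ∨ h.natDegree = 1 ∨ (g.natDegree = 2 ∧ h.natDegree = 2)) with
    hd | hd | ⟨hd2, hd2'⟩
  · exact hfac1 g h hgh hmg hd
  · exact hfac1 h g (by rw [hgh, mul_comm]) hmh hd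
  -- both quadratic
  have hgs := monic_quad_struct g hmg hd2
  have hhs := monic_quad_struct h hmh hd2'
  -- determine coefficients of g
  have hc0 : g.coeff 0 = 1 := by
    by_contra hc
    have hc' : g.coeff 0 = 0 := by
      rcases (by decide : ∀ u : ZMod 2, u = 0 ∨ u = 1) (g.coeff 0) with h' | h'
      · exact h'
      · exact absurd h' hc
    apply hnr 0
    rw [IsRoot, hgh, eval_mul, hgs]
    simp [hc']
  have hc1 : g.coeff 1 = 1 := by
    by_contra hc
    have hc' : g.coeff 1 = 0 := by
      rcases (by decide : ∀ u : ZMod 2, u = 0 ∨ u = 1) (g.coeff 1) with h' | h'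
      · exact h'
      · exact absurd h' hc
    apply hnr 1
    rw [IsRoot, hgh, eval_mul, hgs]
    simp [hc', hc0]
    exact Or.inl (by decide)
  have hc0' : h.coeff 0 = 1 := by
    by_contra hc
    have hc' : h.coeff 0 = 0 := by
      rcases (by decide : ∀ u : ZMod 2, u = 0 ∨ u = 1) (h.coeff 0) with h' | h'
      · exact h'
      · exact absurd h' hc
    apply hnr 0
    rw [IsRoot, hgh, eval_mul, hhs]
    simp [hc']
  have hc1' : h.coeff 1 = 1 := by
    by_contra hc
    have hc' : h.coeff 1 = 0 := by
      rcases (by decide : ∀ u : ZMod 2, u = 0 ∨ u = 1) (h.coeff 1) with h' | h'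
      · exact h'
      · exact absurd h' hc
    apply hnr 1
    rw [IsRoot, hgh, eval_mul, hhs]
    simp [hc', hc0']
    exact Or.inr (by decide)
  rw [hgs, hhs, hc0, hc1, hc0', hc1'] at hgh
  -- now p = (X^2+X+1)^2, contradiction via derivative
  have hD := congrArg derivative hgh
  rw [derivative_mul] at hD
  simp only [derivative_add, derivative_pow, derivative_X, derivative_one, derivative_mul,
    derivative_C, map_one] at hD
  have h4 : (4 : ZMod 2) = 0 := by decide
  have h2 : (2 : ZMod 2) = 0 := by decide
  simp only [show ((4:ℕ):ZMod 2) = 0 by decide, show ((2:ℕ):ZMod 2) = 0 by decide, map_zero,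
    zero_mul, mul_zero, zero_add, add_zero, mul_one, one_mul] at hD
  have hone0 : (1 : (ZMod 2)[X]) = 0 := by
    rw [hD]
    exact CharTwo.add_self_eq_zero _
  exact one_ne_zero hone0


lemma fZ_monic (b : ℤ) : (X ^ 4 + C b * X + C b : ℤ[X]).Monic := by
  monicity!

lemma fZ_natDegree (b : ℤ) : (X ^ 4 + C b * X + C b : ℤ[X]).natDegree = 4 := by
  compute_degree!

lemma fZ_irred (b : ℤ) (hsf : Squarefree b) (h0 : b ≠ 0) :
    Irreducible (X ^ 4 + C b * X + C b : ℤ[X]) := by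
  have hmon := fZ_monic b
  by_cases hb1 : b.natAbs = 1
  · apply hmon.irreducible_of_irreducible_map (Int.castRingHom (ZMod 2))
    have hmap : (X ^ 4 + C b * X + C b : ℤ[X]).map (Int.castRingHom (ZMod 2))
        = X ^ 4 + X + 1 := by
      rcases Int.natAbs_eq_iff.mp hb1 with rfl | rfl
      · simp only [Polynomial.map_add, Polynomial.map_pow, Polynomial.map_mul, map_C, map_X]
        norm_num
      · simp only [Polynomial.map_add, Polynomial.map_pow, Polynomial.map_mul, map_C, map_X]
        norm_num
        simp only [CharTwo.neg_eq]
    rw [hmap]; exact irr_F2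
  · obtain ⟨p, hp, hpb⟩ := Int.exists_prime_and_dvd hb1
    have hprime : Ideal.IsPrime (Ideal.span {p} : Ideal ℤ) :=
      (Ideal.span_singleton_prime hp.ne_zero).mpr hp
    have heis : (X ^ 4 + C b * X + C b : ℤ[X]).IsEisensteinAt (Ideal.span {p}) := by
      constructor
      · rw [hmon.leadingCoeff, Ideal.mem_span_singleton]
        intro h1
        exact hp.not_unit (isUnit_of_dvd_one h1)
      · intro n hn
        rw [fZ_natDegree] at hn
        interval_cases n <;>
          simp [coeff_X_pow, coeff_C, coeff_C_mul, coeff_X, Ideal.mem_span_singleton, hpb,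
            dvd_zero, -C_eq_intCast, -eq_intCast]
      · intro hmem
        rw [Ideal.span_singleton_pow, Ideal.mem_span_singleton] at hmem
        simp only [coeff_add, coeff_X_pow, coeff_C_mul, coeff_X, coeff_C] at hmem
        norm_num at hmem
        have : p * p ∣ b := by rwa [← pow_two]
        exact hp.not_unit (hsf p this)
    exact heis.irreducible hprime hmon.isPrimitive (by rw [fZ_natDegree]; norm_num)

lemma fQ_irred (b : ℤ) (hsf : Squarefree b) (h0 : b ≠ 0) :
    Irreducible (X ^ 4 + C (b:ℚ) * X + C (b:ℚ) : ℚ[X]) := by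
  have h := fZ_irred b hsf h0
  rw [Polynomial.IsPrimitive.Int.irreducible_iff_irreducible_map_cast
    (fZ_monic b).isPrimitive] at h
  have hmap : (X ^ 4 + C b * X + C b : ℤ[X]).map (Int.castRingHom ℚ)
      = X ^ 4 + C (b:ℚ) * X + C (b:ℚ) := by
    simp [Polynomial.map_add, Polynomial.map_pow, map_C, map_X]
  rwa [hmap] at h

lemma gQ_monic (b : ℤ) : (X ^ 3 - C (4*(b:ℚ)) * X - C ((b:ℚ)^2) : ℚ[X]).Monic := by
  monicity!

lemma gQ_natDegree (b : ℤ) : (X ^ 3 - C (4*(b:ℚ)) * X - C ((b:ℚ)^2) : ℚ[X]).natDegree = 3 := by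
  compute_degree!

lemma gQ_irred (b : ℤ) (hsf : Squarefree b) (h0 : b ≠ 0) (h3 : b ≠ 3) (h5 : b ≠ 5) :
    Irreducible (X ^ 3 - C (4*(b:ℚ)) * X - C ((b:ℚ)^2) : ℚ[X]) := by
  set g : ℚ[X] := X ^ 3 - C (4*(b:ℚ)) * X - C ((b:ℚ)^2) with hg
  have hmon := gQ_monic b
  have hne1 : g ≠ 1 := by
    intro h1
    have := gQ_natDegree b
    rw [← hg, h1] at this
    simp at this
  rw [hmon.irreducible_iff_lt_natDegree_lt hne1]
  intro q hq hdq hdvd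
  rw [gQ_natDegree] at hdq
  simp only [Finset.mem_Ioc] at hdq
  have hdq1 : q.natDegree = 1 := by omega
  -- q = X + C c, so -c is a rational root
  have hqs := monic_lin_struct q hq hdq1
  set x : ℚ := -(q.coeff 0) with hx
  have hroot : g.eval x = 0 := by
    obtain ⟨r, hr⟩ := hdvd
    rw [hg, hr, eval_mul, hqs]
    simp [hx]
  rw [hg] at hroot
  simp only [eval_sub, eval_pow, eval_mul, eval_X, eval_C] at hroot
  -- x is integral over ℤ
  have hint : IsIntegral ℤ x := by
    refine ⟨X ^ 3 - C (4*b) * X - C (b^2), by monicity!, ?_⟩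
    have haeval : Polynomial.aeval x (X ^ 3 - C (4*b) * X - C (b^2) : ℤ[X]) = 0 := by
      simp only [map_sub, map_pow, map_mul, aeval_X, aeval_C, algebraMap_int_eq, eq_intCast, map_intCast, map_ofNat]
      push_cast
      linear_combination hroot
    simpa [Polynomial.aeval_def] using haeval
  obtain ⟨r, hr⟩ := IsIntegrallyClosed.isIntegral_iff.mp hint
  apply cubic_no_int_root b hsf h0 h3 h5 r
  rw [← hr] at hroot
  simp only [algebraMap_int_eq, eq_intCast] at hroot
  exact_mod_cast hroot


noncomputable def permMulEquiv {α β : Type*} (e : α ≃ β) : Equiv.Perm α ≃* Equiv.Perm β :=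
  { e.permCongr with
    map_mul' := by
      intro σ τ
      ext x
      simp [Equiv.permCongr_apply, Equiv.Perm.mul_apply] }

lemma sq_mem_of_index_two' {G : Type*} [Group G] (H : Subgroup G) (h : H.index = 2) (g : G) :
    g * g ∈ H := by
  obtain ⟨a, ha⟩ := Subgroup.index_eq_two_iff.mp h
  by_cases hg : g ∈ H
  · exact H.mul_mem hg hg
  · have h1 : g * a ∈ H := ((ha g).resolve_right (fun hh => hg hh.1)).1
    by_contra hgg
    have h2 : (g * g) * a ∈ H := ((ha (g * g)).resolve_right (fun hh => hgg hh.1)).1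
    have h3 : ((g * g) * a) * (g * a)⁻¹ ∈ H := H.mul_mem h2 (H.inv_mem h1)
    have he : ((g * g) * a) * (g * a)⁻¹ = g := by group
    rw [he] at h3
    exact hg h3

lemma multiset_four {α : Type*} {s : Multiset α} (h : Multiset.card s = 4) :
    ∃ a b c d, s = {a, b, c, d} := by
  have hpos : 0 < Multiset.card s := by omega
  rcases Multiset.card_pos_iff_exists_mem.mp hpos with ⟨a, ha⟩
  obtain ⟨t, rfl⟩ := Multiset.exists_cons_of_mem ha
  rw [Multiset.card_cons] at h
  have h3 : Multiset.card t = 3 := by omega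
  rcases Multiset.card_eq_three.mp h3 with ⟨x, y, z, rfl⟩
  exact ⟨a, x, y, z, rfl⟩

theorem galois_group_quartic_bb (b : ℤ) (hsf : Squarefree b) (h0 : b ≠ 0) (h3 : b ≠ 3)
    (h5 : b ≠ 5) (hsf' : Squarefree (256 - 27 * b)) :
    Nonempty ((X ^ 4 + C (b : ℚ) * X + C (b : ℚ)).Gal ≃* Equiv.Perm (Fin 4)) := by
  classical
  set fq : ℚ[X] := X ^ 4 + C (b:ℚ) * X + C (b:ℚ) with hfq
  have hmon : fq.Monic := by unfold fq; monicity!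
  have hdeg : fq.natDegree = 4 := by unfold fq; compute_degree!
  have hirr : Irreducible fq := fQ_irred b hsf h0
  have hsep : fq.Separable := hirr.separable
  set K := fq.SplittingField with hK
  haveI : IsSplittingField ℚ K fq := Polynomial.IsSplittingField.splittingField fq
  haveI : IsGalois ℚ K := IsGalois.of_separable_splitting_field hsep
  have hsplits : Splits (fq.map (algebraMap ℚ K)) := SplittingField.splits fq
  haveI : Fact (Splits (fq.map (algebraMap ℚ K))) := ⟨hsplits⟩
  -- extract the four roots
  have hcardroots : Multiset.card (fq.map (algebraMap ℚ K)).roots = 4 := by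
    have h := splits_iff_card_roots.mp hsplits
    rwa [natDegree_map, hdeg] at h
  obtain ⟨r1, r2, r3, r4, hroots⟩ := multiset_four hcardroots
  have hprod : fq.map (algebraMap ℚ K) = (X - C r1) * ((X - C r2) * ((X - C r3) * (X - C r4))) := by
    have h := hsplits.eq_prod_roots_of_monic (hmon.map _)
    rw [hroots] at h
    simpa [Multiset.map_cons, Multiset.prod_cons] using h
  set β : K := algebraMap ℚ K ((b:ℚ)) with hβ
  have heval : ∀ t : K, (t - r1) * (t - r2) * (t - r3) * (t - r4) = t^4 + β * t + β := by
    intro t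
    have h := congrArg (eval t) hprod
    simp only [eval_map, hfq, eval₂_add, eval₂_mul, eval₂_pow, eval₂_X, eval₂_C, eval_mul,
      eval_sub, eval_X, eval_C] at h
    rw [← hβ] at h
    linear_combination -h
  have h1 := heval 1
  have hm1 := heval (-1)
  have h2 := heval 2
  have hm2 := heval (-2)
  have h00 := heval 0
  have hE1 : r1 + r2 + r3 + r4 = 0 := by
    linear_combination (1/6 : K) * h1 - (1/6 : K) * hm1 - (1/12 : K) * h2 + (1/12 : K) * hm2
  have hE2 : r1*r2 + r1*r3 + r1*r4 + r2*r3 + r2*r4 + r3*r4 = 0 := by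
    linear_combination (-1/6 : K) * h1 - (1/6 : K) * hm1 + (1/6 : K) * h2 + (1/6 : K) * hm2
  have hE3 : r1*r2*r3 + r1*r2*r4 + r1*r3*r4 + r2*r3*r4 = -β := by
    linear_combination (-2/3 : K) * h1 + (2/3 : K) * hm1 + (1/12 : K) * h2 - (1/12 : K) * hm2
  have hE4 : r1*r2*r3*r4 = β := by
    linear_combination h00
  -- degree 4 divides
  haveI : FiniteDimensional ℚ K := inferInstance
  have hr1 : aeval r1 fq = 0 := by
    rw [aeval_def, ← eval_map, hprod]
    simp
  have hmin1 : minpoly ℚ r1 = fq := (minpoly.eq_of_irreducible_of_monic hirr hr1 hmon).symm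
  have hint1 : IsIntegral ℚ r1 := IsIntegral.of_finite ℚ r1
  have h4dvd : 4 ∣ Module.finrank ℚ K := by
    refine ⟨Module.finrank ℚ⟮r1⟯ K, ?_⟩
    rw [← Module.finrank_mul_finrank ℚ ℚ⟮r1⟯ K, IntermediateField.adjoin.finrank hint1, hmin1, hdeg]
  -- degree 3 divides (resolvent cubic)
  set gq : ℚ[X] := X ^ 3 - C (4*(b:ℚ)) * X - C ((b:ℚ)^2) with hgq
  have hgmon : gq.Monic := by unfold gq; monicity!
  have hgdeg : gq.natDegree = 3 := by unfold gq; compute_degree!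
  have hgirr : Irreducible gq := gQ_irred b hsf h0 h3 h5
  set θ : K := r1*r2 + r3*r4 with hθdef
  have hθ : aeval θ gq = 0 := by
    simp only [hgq, map_sub, map_pow, map_mul, aeval_X, aeval_C, map_ofNat]
    rw [← hβ]
    linear_combination (-(θ*(r1*r2*r3 + r1*r2*r4 + r1*r3*r4 + r2*r3*r4))
        + (r1+r2+r3+r4)*(r1*r2*r3*r4)) * hE1
      + (θ^2 - 4*(r1*r2*r3*r4)) * hE2
      + ((r1*r2*r3 + r1*r2*r4 + r1*r3*r4 + r2*r3*r4) - β) * hE3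
      + (4*θ) * hE4
  have hminθ : minpoly ℚ θ = gq := (minpoly.eq_of_irreducible_of_monic hgirr hθ hgmon).symm
  have hintθ : IsIntegral ℚ θ := IsIntegral.of_finite ℚ θ
  have h3dvd : 3 ∣ Module.finrank ℚ K := by
    refine ⟨Module.finrank ℚ⟮θ⟯ K, ?_⟩
    rw [← Module.finrank_mul_finrank ℚ ℚ⟮θ⟯ K, IntermediateField.adjoin.finrank hintθ, hminθ, hgdeg]
  -- the square root of the discriminant
  set δ : K := (r1-r2)*(r1-r3)*(r1-r4)*(r2-r3)*(r2-r4)*(r3-r4) with hδdef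
  have hδsq : δ^2 = 256*β^3 - 27*β^4 := by
    linear_combination (-192*(r1*r2*r3 + r1*r2*r4 + r1*r3*r4 + r2*r3*r4)*(r1*r2*r3*r4)^2
        + 144*(r1+r2+r3+r4)*(r1*r2 + r1*r3 + r1*r4 + r2*r3 + r2*r4 + r3*r4)*(r1*r2*r3*r4)^2
        - 27*(r1+r2+r3+r4)^3*(r1*r2*r3*r4)^2
        - 6*(r1+r2+r3+r4)*(r1*r2*r3 + r1*r2*r4 + r1*r3*r4 + r2*r3*r4)^2*(r1*r2*r3*r4)
        - 80*(r1*r2 + r1*r3 + r1*r4 + r2*r3 + r2*r4 + r3*r4)^2*(r1*r2*r3 + r1*r2*r4 + r1*r3*r4 + r2*r3*r4)*(r1*r2*r3*r4)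
        + 18*(r1+r2+r3+r4)^2*(r1*r2 + r1*r3 + r1*r4 + r2*r3 + r2*r4 + r3*r4)*(r1*r2*r3 + r1*r2*r4 + r1*r3*r4 + r2*r3*r4)*(r1*r2*r3*r4)
        - 4*(r1+r2+r3+r4)*(r1*r2 + r1*r3 + r1*r4 + r2*r3 + r2*r4 + r3*r4)^3*(r1*r2*r3*r4)
        + 18*(r1*r2 + r1*r3 + r1*r4 + r2*r3 + r2*r4 + r3*r4)*(r1*r2*r3 + r1*r2*r4 + r1*r3*r4 + r2*r3*r4)^3
        - 4*(r1+r2+r3+r4)^2*(r1*r2*r3 + r1*r2*r4 + r1*r3*r4 + r2*r3*r4)^3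
        + (r1+r2+r3+r4)*(r1*r2 + r1*r3 + r1*r4 + r2*r3 + r2*r4 + r3*r4)^2*(r1*r2*r3 + r1*r2*r4 + r1*r3*r4 + r2*r3*r4)^2) * hE1
      + (-128*(r1*r2 + r1*r3 + r1*r4 + r2*r3 + r2*r4 + r3*r4)*(r1*r2*r3*r4)^2
        + 144*(r1*r2*r3 + r1*r2*r4 + r1*r3*r4 + r2*r3*r4)^2*(r1*r2*r3*r4)
        + 16*(r1*r2 + r1*r3 + r1*r4 + r2*r3 + r2*r4 + r3*r4)^3*(r1*r2*r3*r4)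
        - 4*(r1*r2 + r1*r3 + r1*r4 + r2*r3 + r2*r4 + r3*r4)^2*(r1*r2*r3 + r1*r2*r4 + r1*r3*r4 + r2*r3*r4)^2) * hE2
      + (-27*((r1*r2*r3 + r1*r2*r4 + r1*r3*r4 + r2*r3*r4) - β)*((r1*r2*r3 + r1*r2*r4 + r1*r3*r4 + r2*r3*r4)^2 + β^2)) * hE3
      + (256*((r1*r2*r3*r4)^2 + (r1*r2*r3*r4)*β + β^2)) * hE4
  have hδnot : δ ∉ Set.range (algebraMap ℚ K) := by
    rintro ⟨q, hq⟩
    have hinj : Function.Injective (algebraMap ℚ K) := (algebraMap ℚ K).injective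
    have hq2 : q^2 = 256*(b:ℚ)^3 - 27*(b:ℚ)^4 := by
      apply hinj
      rw [map_pow, hq, hδsq]
      push_cast [map_sub, map_mul, map_pow, map_ofNat]
      try rw [← hβ]
      try ring
    have hintq : IsIntegral ℤ q := by
      refine ⟨X^2 - C (256*b^3 - 27*b^4), by monicity!, ?_⟩
      have : Polynomial.aeval q (X^2 - C (256*b^3 - 27*b^4) : ℤ[X]) = 0 := by
        simp only [map_sub, map_pow, map_mul, aeval_X, aeval_C, algebraMap_int_eq, eq_intCast,
          map_intCast, map_ofNat]
        push_cast
        linear_combination hq2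
      simpa [Polynomial.aeval_def] using this
    obtain ⟨m, hm⟩ := IsIntegrallyClosed.isIntegral_iff.mp hintq
    apply not_square_aux b hsf h0 h3 h5 hsf' m
    rw [← hm] at hq2
    simp only [algebraMap_int_eq, eq_intCast] at hq2
    have : ((m^2 : ℤ) : ℚ) = ((b^3*(256 - 27*b) : ℤ) : ℚ) := by push_cast; linear_combination hq2
    exact_mod_cast this
  -- Galois group facts
  have hcardGal : Fintype.card fq.Gal = Module.finrank ℚ K := by
    rw [← Nat.card_eq_fintype_card]; exact Polynomial.Gal.card_of_separable hsep
  have hcardrs : Fintype.card (fq.rootSet K) = 4 := by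
    rw [card_rootSet_eq_natDegree hsep hsplits, hdeg]
  let e : fq.rootSet K ≃ Fin 4 := Fintype.equivFinOfCardEq hcardrs
  let ψ : fq.Gal →* Equiv.Perm (Fin 4) :=
    (permMulEquiv e).toMonoidHom.comp (Polynomial.Gal.galActionHom fq K)
  have hψinj : Function.Injective ψ :=
    (permMulEquiv e).injective.comp (Polynomial.Gal.galActionHom_injective fq K)
  have hperm24 : Nat.card (Equiv.Perm (Fin 4)) = 24 := by
    rw [Nat.card_eq_fintype_card]
    simp [Fintype.card_perm]
    norm_num [Nat.factorial]
  have hcard24 : Fintype.card fq.Gal ∣ 24 := by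
    have hr : Nat.card ψ.range = Nat.card fq.Gal :=
      (Nat.card_congr (MonoidHom.ofInjective hψinj).toEquiv).symm
    have hd := Subgroup.card_subgroup_dvd_card ψ.range
    rw [hr, hperm24, Nat.card_eq_fintype_card] at hd
    exact hd
  have h12dvd : 12 ∣ Fintype.card fq.Gal := by
    rw [hcardGal]
    exact Nat.Coprime.mul_dvd_of_dvd_of_dvd (by norm_num) h4dvd h3dvd
  have hpos : 0 < Fintype.card fq.Gal := Fintype.card_pos
  have hn : Fintype.card fq.Gal = 12 ∨ Fintype.card fq.Gal = 24 := by
    have hle := Nat.le_of_dvd (by norm_num) hcard24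
    rcases h12dvd with ⟨j, hj⟩
    omega
  have hcard : Fintype.card fq.Gal = 24 := by
    rcases hn with h12 | h24
    · exfalso
      -- the degree-2 subfield ℚ(δ)
      have hintδ : IsIntegral ℚ δ := IsIntegral.of_finite ℚ δ
      have hdvdδ : minpoly ℚ δ ∣ X^2 - C (256*(b:ℚ)^3 - 27*(b:ℚ)^4) := by
        apply minpoly.dvd
        simp only [map_sub, map_pow, map_mul, aeval_X, aeval_C, map_ofNat]
        rw [← hβ]
        linear_combination hδsq
      have hd2 : (minpoly ℚ δ).natDegree = 2 := by
        have hne : (X^2 - C (256*(b:ℚ)^3 - 27*(b:ℚ)^4) : ℚ[X]) ≠ 0 := by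
          intro hzero
          have := congrArg natDegree hzero
          rw [natDegree_zero] at this
          have h2' : (X^2 - C (256*(b:ℚ)^3 - 27*(b:ℚ)^4) : ℚ[X]).natDegree = 2 := by
            compute_degree!
          omega
        have hle := natDegree_le_of_dvd hdvdδ hne
        have h2' : (X^2 - C (256*(b:ℚ)^3 - 27*(b:ℚ)^4) : ℚ[X]).natDegree = 2 := by
          compute_degree!
        rw [h2'] at hle
        have hne1 : (minpoly ℚ δ).natDegree ≠ 1 := by
          intro h1
          exact hδnot (by exact_mod_cast minpoly.natDegree_eq_one_iff.mp h1)
        have hposd : 0 < (minpoly ℚ δ).natDegree := minpoly.natDegree_pos hintδ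
        omega
      have hfrL : Module.finrank ℚ ℚ⟮δ⟯ = 2 := by
        rw [IntermediateField.adjoin.finrank hintδ, hd2]
      have hfrK : Module.finrank ℚ K = 12 := by rw [← hcardGal, h12]
      have hfrLK : Module.finrank ℚ⟮δ⟯ K = 6 := by
        have hmul := Module.finrank_mul_finrank ℚ ℚ⟮δ⟯ K
        rw [hfrL, hfrK] at hmul
        omega
      set H : Subgroup fq.Gal := IntermediateField.fixingSubgroup ℚ⟮δ⟯ with hH
      have hcardH : Nat.card H = 6 := by
        have hcc : Nat.card H = Nat.card (K ≃ₐ[ℚ⟮δ⟯] K) :=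
          Nat.card_congr (IntermediateField.fixingSubgroupEquiv ℚ⟮δ⟯).toEquiv
        rw [hcc, IsGalois.card_aut_eq_finrank, hfrLK]
      set P : Subgroup (Equiv.Perm (Fin 4)) := ψ.range with hP
      have hcardP : Nat.card P = 12 := by
        rw [(Nat.card_congr (MonoidHom.ofInjective hψinj).toEquiv).symm,
          Nat.card_eq_fintype_card, h12]
      have hPindex : P.index = 2 := by
        have hmi := Subgroup.index_mul_card P
        rw [hcardP, hperm24] at hmi
        omega
      set Q : Subgroup (Equiv.Perm (Fin 4)) := H.map ψ with hQ
      have hQP : Q ≤ P := Subgroup.map_le_range ψ H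
      have hcardQ : Nat.card Q = 6 := by
        rw [← hcardH]
        exact (Nat.card_congr (Subgroup.equivMapOfInjective H ψ hψinj).toEquiv).symm
      set Q' : Subgroup P := Q.subgroupOf P with hQ'
      have hcardQ' : Nat.card Q' = 6 := by
        rw [← hcardQ]
        exact Nat.card_congr (Subgroup.subgroupOfEquivOfLe hQP).toEquiv
      have hcardPG : Nat.card P = 12 := hcardP
      have hQ'index : Q'.index = 2 := by
        have hmi := Subgroup.index_mul_card Q'
        rw [hcardQ', Nat.card_eq_fintype_card] at hmi
        rw [← Nat.card_eq_fintype_card] at hmi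
        rw [hcardPG] at hmi
        omega
      have hT : ∀ σ : Equiv.Perm (Fin 4), σ ^ 3 = 1 → σ ∈ Q := by
        intro σ hσ
        have hσ2 : σ * σ ∈ P := sq_mem_of_index_two' P hPindex σ
        have h4' : ((⟨σ*σ, hσ2⟩ : P) * ⟨σ*σ, hσ2⟩) ∈ Q' := sq_mem_of_index_two' Q' hQ'index _
        rw [Subgroup.mem_subgroupOf] at h4'
        have hmm : ((((⟨σ*σ, hσ2⟩ : P) * ⟨σ*σ, hσ2⟩ : P)) : Equiv.Perm (Fin 4)) = σ := by
          push_cast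
          have h16 : σ * σ * (σ * σ) = σ := by
            have hc : σ * σ * (σ * σ) = σ^3 * σ := by
              simp [pow_succ, sq, mul_assoc]
            rw [hc, hσ, one_mul]
          exact h16
        rwa [hmm] at h4'
      have hinj9 : Function.Injective
          (fun (x : {σ : Equiv.Perm (Fin 4) // σ^3 = 1}) => (⟨x.1, hT x.1 x.2⟩ : Q)) := by
        intro x y hxy
        exact Subtype.ext (by simpa using congrArg Subtype.val hxy)
      have h9 : (9:ℕ) ≤ Nat.card Q := by
        have hle := Fintype.card_le_of_injective _ hinj9
        rw [show Fintype.card {σ : Equiv.Perm (Fin 4) // σ^3 = 1} = 9 by decide] at hle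
        rw [Nat.card_eq_fintype_card]
        exact hle
      omega
    · exact h24
  have hbij : Function.Bijective ψ := by
    rw [Fintype.bijective_iff_injective_and_card]
    refine ⟨hψinj, ?_⟩
    rw [hcard]
    rw [← Nat.card_eq_fintype_card (α := Equiv.Perm (Fin 4)), hperm24]
  exact ⟨MulEquiv.ofBijective ψ hbij⟩
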